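/- Let I ⊆ ℝ be an interval and let X, Φ, V₁, V₂ : I → ℝ be differentiable with X(s) > 0 on I, satisfying X′ = V₁, Φ′ = V₂/X, V₁′ = V₂²/X, V₂′ = −V₁V₂/X on I. Then: (i) (X·V₁)′ = V₁² + V₂² on I; (ii) if there exists t₀ ∈ I with V₁(t₀) = 0, and if the constant E := V₁² + V₂² is positive, then for all s ∈ I: X(s)·V₁(s) = E·(s − t₀) and X(s)² = E·(s − t₀)² + M²/E, where M := X·V₂ is constant on I. -/

import Mathlib

/-- On a convex set, a function with derivative zero is constant. -/
lemma constOn_of_deriv_zero {I : Set ℝ} (hI : Convex ℝ I) {f : ℝ → ℝ}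
    (hf : ∀ s ∈ I, HasDerivAt f 0 s) {a b : ℝ} (ha : a ∈ I) (hb : b ∈ I) :
    f a = f b := by
  have h := hI.norm_image_sub_le_of_norm_hasDerivWithin_le
    (fun x hx => (hf x hx).hasDerivWithinAt) (C := 0)
    (fun x hx => by simp) hb ha
  have : ‖f a - f b‖ ≤ 0 := by simpa using h
  have := norm_nonneg (f a - f b)
  have h0 : ‖f a - f b‖ = 0 := le_antisymm ‹_› ‹_›
  have := norm_eq_zero.mp h0
  linarith [sub_eq_zero.mp this]

/-- Equations (6-1), (6-4) and (6-6): the radial trajectory of the backward free-transport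
characteristic in polar coordinates after its turning time. -/
theorem polar_characteristics_radial_trajectory
    (I : Set ℝ) (hI : Convex ℝ I)
    (X Φ V₁ V₂ : ℝ → ℝ)
    (hXpos : ∀ s ∈ I, 0 < X s)
    (hX : ∀ s ∈ I, HasDerivAt X (V₁ s) s)
    (hΦ : ∀ s ∈ I, HasDerivAt Φ (V₂ s / X s) s)
    (hV₁ : ∀ s ∈ I, HasDerivAt V₁ ((V₂ s) ^ 2 / X s) s)
    (hV₂ : ∀ s ∈ I, HasDerivAt V₂ (-(V₁ s * V₂ s) / X s) s) :
    (∀ s ∈ I, HasDerivAt (fun τ => X τ * V₁ τ) (V₁ s ^ 2 + V₂ s ^ 2) s) ∧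
    (∀ t₀ ∈ I, V₁ t₀ = 0 → 0 < V₁ t₀ ^ 2 + V₂ t₀ ^ 2 →
      ∀ s ∈ I,
        X s * V₁ s = (V₁ t₀ ^ 2 + V₂ t₀ ^ 2) * (s - t₀) ∧
        (X s) ^ 2 = (V₁ t₀ ^ 2 + V₂ t₀ ^ 2) * (s - t₀) ^ 2 +
          (X t₀ * V₂ t₀) ^ 2 / (V₁ t₀ ^ 2 + V₂ t₀ ^ 2)) := by
  -- part (i)
  have hXV₁ : ∀ s ∈ I, HasDerivAt (fun τ => X τ * V₁ τ) (V₁ s ^ 2 + V₂ s ^ 2) s := by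
    intro s hs
    have hXne : X s ≠ 0 := (hXpos s hs).ne'
    have h : HasDerivAt (fun τ => X τ * V₁ τ) _ s := (hX s hs).mul (hV₁ s hs)
    convert h using 1
    field_simp
  refine ⟨hXV₁, ?_⟩
  -- energy is constant
  have hEconst : ∀ s ∈ I, HasDerivAt (fun τ => V₁ τ ^ 2 + V₂ τ ^ 2) 0 s := by
    intro s hs
    have hXne : X s ≠ 0 := (hXpos s hs).ne'
    have h : HasDerivAt (fun τ => V₁ τ ^ 2 + V₂ τ ^ 2) _ s := ((hV₁ s hs).pow 2).add ((hV₂ s hs).pow 2)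
    convert h using 1
    field_simp
    ring
  -- angular momentum is constant
  have hMconst : ∀ s ∈ I, HasDerivAt (fun τ => X τ * V₂ τ) 0 s := by
    intro s hs
    have hXne : X s ≠ 0 := (hXpos s hs).ne'
    have h : HasDerivAt (fun τ => X τ * V₂ τ) _ s := (hX s hs).mul (hV₂ s hs)
    convert h using 1
    field_simp
    ring
  intro t₀ ht₀ hV₁0 hEpos s hs
  set E := V₁ t₀ ^ 2 + V₂ t₀ ^ 2 with hE
  have hEs : V₁ s ^ 2 + V₂ s ^ 2 = E := constOn_of_deriv_zero hI hEconst hs ht₀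
  have hMs : X s * V₂ s = X t₀ * V₂ t₀ := constOn_of_deriv_zero hI hMconst hs ht₀
  -- X*V₁ − E*(τ−t₀) is constant
  have hF : ∀ τ ∈ I, HasDerivAt (fun τ => X τ * V₁ τ - E * (τ - t₀)) 0 τ := by
    intro τ hτ
    have hEτ : V₁ τ ^ 2 + V₂ τ ^ 2 = E := constOn_of_deriv_zero hI hEconst hτ ht₀
    have h : HasDerivAt (fun τ => X τ * V₁ τ - E * (τ - t₀)) _ τ := (hXV₁ τ hτ).sub (((hasDerivAt_id τ).sub_const t₀).const_mul E)
    simpa [hEτ] using h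
  have h1 : X s * V₁ s - E * (s - t₀) = X t₀ * V₁ t₀ - E * (t₀ - t₀) :=
    constOn_of_deriv_zero hI hF hs ht₀
  have hxv : X s * V₁ s = E * (s - t₀) := by
    rw [hV₁0] at h1; nlinarith [h1]
  refine ⟨hxv, ?_⟩
  -- X² − E(τ−t₀)² is constant
  have hG : ∀ τ ∈ I, HasDerivAt (fun τ => X τ ^ 2 - E * (τ - t₀) ^ 2) 0 τ := by
    intro τ hτ
    have hEτ : V₁ τ ^ 2 + V₂ τ ^ 2 = E := constOn_of_deriv_zero hI hEconst hτ ht₀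
    have hFτ : X τ * V₁ τ - E * (τ - t₀) = X t₀ * V₁ t₀ - E * (t₀ - t₀) :=
      constOn_of_deriv_zero hI hF hτ ht₀
    have hxvτ : X τ * V₁ τ = E * (τ - t₀) := by
      rw [hV₁0] at hFτ; nlinarith [hFτ]
    have h : HasDerivAt (fun τ => X τ ^ 2 - E * (τ - t₀) ^ 2) _ τ := ((hX τ hτ).pow 2).sub ((((hasDerivAt_id τ).sub_const t₀).pow 2).const_mul E)
    convert h using 1
    push_cast
    simp only [id_eq, pow_one, mul_one]
    nlinarith [hxvτ]
  have h2 : X s ^ 2 - E * (s - t₀) ^ 2 = X t₀ ^ 2 - E * (t₀ - t₀) ^ 2 :=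
    constOn_of_deriv_zero hI hG hs ht₀
  -- X t₀ ^ 2 = M² / E
  have hXt : X t₀ ^ 2 * E = (X t₀ * V₂ t₀) ^ 2 := by
    have : E = V₂ t₀ ^ 2 := by rw [hE, hV₁0]; ring
    rw [this]; ring
  have hEne : E ≠ 0 := hEpos.ne'
  field_simp
  nlinarith [h2, hXt]
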